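/- Let R : ℝᵐ → S⁺ₙ(ℝ) be a C^k (respectively smooth) map into the symmetric positive definite matrices. Then the pointwise positive definite square root S(x) = R(x)^{1/2} defines a C^k (respectively smooth) map S : ℝᵐ → S⁺ₙ(ℝ). -/

import Mathlib

open Matrix

noncomputable section PosdefSqrtAux

/-- Injectivity of the Sylvester operator `H ↦ A * H + H * A` for positive definite `A`. -/
private lemma sylv_inj {n : ℕ} {A : Matrix (Fin n) (Fin n) ℝ} (hA : A.PosDef)
    {H : Matrix (Fin n) (Fin n) ℝ} (h : A * H + H * A = 0) : H = 0 := by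
  have hH := hA.1
  set U : Matrix (Fin n) (Fin n) ℝ := (hH.eigenvectorUnitary : Matrix (Fin n) (Fin n) ℝ) with hUdef
  have hU2 : U * star U = 1 := (Matrix.mem_unitaryGroup_iff).mp hH.eigenvectorUnitary.2
  have hU1 : star U * U = 1 := (Matrix.mem_unitaryGroup_iff').mp hH.eigenvectorUnitary.2
  set D : Matrix (Fin n) (Fin n) ℝ :=
    diagonal (RCLike.ofReal ∘ hH.eigenvalues) with hDdef
  have hspec : A = U * D * star U := hH.spectral_theorem
  have cancel1 : ∀ X : Matrix (Fin n) (Fin n) ℝ, U * (star U * X) = X := fun X => by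
    rw [← mul_assoc, hU2, one_mul]
  have cancel2 : ∀ X : Matrix (Fin n) (Fin n) ℝ, star U * (U * X) = X := fun X => by
    rw [← mul_assoc, hU1, one_mul]
  set K : Matrix (Fin n) (Fin n) ℝ := star U * H * U with hKdef
  have key : D * K + K * D = 0 := by
    have h1 : D * K = star U * (A * H * U) := by
      rw [hspec]; simp only [mul_assoc, cancel1, cancel2]
      simp only [hKdef, hU1, mul_one, mul_assoc]
    have h2 : K * D = star U * (H * A * U) := by
      rw [hspec]; simp only [mul_assoc, cancel1, cancel2]
      simp only [hKdef, hU1, mul_one, mul_assoc]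
    rw [h1, h2, ← mul_add, ← add_mul, h, zero_mul, mul_zero]
  have hK : K = 0 := by
    ext i j
    have h0 := congrFun (congrFun key i) j
    simp only [hDdef, Matrix.add_apply, Matrix.diagonal_mul, Matrix.mul_diagonal,
      Matrix.zero_apply, Function.comp_apply, RCLike.ofReal_real_eq_id, id_eq] at h0
    have hpos : (0:ℝ) < hH.eigenvalues i + hH.eigenvalues j :=
      add_pos (hA.eigenvalues_pos i) (hA.eigenvalues_pos j)
    have h1 : (hH.eigenvalues i + hH.eigenvalues j) * K i j = 0 := by linear_combination h0
    simpa [hpos.ne'] using mul_eq_zero.mp h1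
  have hHK : H = U * K * star U := by
    rw [hKdef]; simp only [mul_assoc, cancel1, cancel2]
    rw [hU2, mul_one]
  rw [hHK, hK, mul_zero, zero_mul]

/-- Positive definiteness is stable under small Hermitian perturbations. -/
private lemma posdef_of_close {n : ℕ} {A : Matrix (Fin n) (Fin n) ℝ} (hA : A.PosDef) :
    ∃ ε > 0, ∀ M : Matrix (Fin n) (Fin n) ℝ, M.IsHermitian →
      (∀ i j, |M i j - A i j| < ε) → M.PosDef := by
  rcases Nat.eq_zero_or_pos n with hn | hn
  · refine ⟨1, one_pos, fun M hM _ => ⟨hM, fun x hx => absurd ?_ hx⟩⟩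
    subst hn; ext i; exact absurd i.2 (Nat.not_lt_zero _)
  have : Nonempty (Fin n) := ⟨⟨0, hn⟩⟩
  have hcont : Continuous fun v : Fin n → ℝ => v ⬝ᵥ A *ᵥ v := by
    show Continuous fun v : Fin n → ℝ => ∑ i, v i * ∑ j, A i j * v j
    exact continuous_finset_sum _ fun i _ => (continuous_apply i).mul
      (continuous_finset_sum _ fun j _ => continuous_const.mul (continuous_apply j))
  obtain ⟨v₀, hv₀S, hmin⟩ := (isCompact_sphere (0 : Fin n → ℝ) 1).exists_isMinOn
    (NormedSpace.sphere_nonempty.mpr zero_le_one) hcont.continuousOn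
  have hv₀norm : ‖v₀‖ = 1 := by simpa using mem_sphere_zero_iff_norm.mp hv₀S
  have hv₀ne : v₀ ≠ 0 := by
    intro h; rw [h, norm_zero] at hv₀norm; exact one_ne_zero hv₀norm.symm
  set c : ℝ := v₀ ⬝ᵥ A *ᵥ v₀ with hc
  have hcpos : 0 < c := by simpa using hA.dotProduct_mulVec_pos hv₀ne
  refine ⟨c / ((n : ℝ) ^ 2 + 1), by positivity, fun M hM hclose => Matrix.PosDef.of_dotProduct_mulVec_pos hM fun x hx => ?_⟩
  set ε : ℝ := c / ((n : ℝ) ^ 2 + 1) with hε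
  set u : Fin n → ℝ := ‖x‖⁻¹ • x with hu
  have hxnorm : (0:ℝ) < ‖x‖ := norm_pos_iff.mpr hx
  have hunorm : ‖u‖ = 1 := by
    rw [hu, norm_smul, norm_inv, norm_norm, inv_mul_cancel₀ hxnorm.ne']
  have hxu : x = ‖x‖ • u := by
    rw [hu, smul_smul, mul_inv_cancel₀ hxnorm.ne', one_smul]
  have hscale : star x ⬝ᵥ M *ᵥ x = ‖x‖ * (‖x‖ * (u ⬝ᵥ M *ᵥ u)) := by
    rw [star_trivial]
    conv_lhs => rw [hxu]
    rw [smul_dotProduct, mulVec_smul, dotProduct_smul, smul_eq_mul, smul_eq_mul]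
  rw [hscale]
  have hbound : ∀ i, |u i| ≤ 1 := fun i => by
    calc |u i| = ‖u i‖ := rfl
    _ ≤ ‖u‖ := norm_le_pi_norm u i
    _ = 1 := hunorm
  have hAu : c ≤ u ⬝ᵥ A *ᵥ u := hmin (mem_sphere_zero_iff_norm.mpr hunorm)
  have hdiff : u ⬝ᵥ M *ᵥ u - u ⬝ᵥ A *ᵥ u = u ⬝ᵥ (M - A) *ᵥ u := by
    rw [sub_mulVec, dotProduct_sub]
  have habs : |u ⬝ᵥ (M - A) *ᵥ u| ≤ (n : ℝ) ^ 2 * ε := by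
    have expand : u ⬝ᵥ (M - A) *ᵥ u = ∑ i, ∑ j, u i * ((M - A) i j * u j) := by
      simp only [dotProduct, mulVec, Finset.mul_sum]
    rw [expand]
    calc |∑ i, ∑ j, u i * ((M - A) i j * u j)|
        ≤ ∑ i, |∑ j, u i * ((M - A) i j * u j)| := Finset.abs_sum_le_sum_abs _ _
      _ ≤ ∑ i : Fin n, ∑ j : Fin n, |u i * ((M - A) i j * u j)| :=
          Finset.sum_le_sum fun i _ => Finset.abs_sum_le_sum_abs _ _
      _ ≤ ∑ _i : Fin n, ∑ _j : Fin n, ε := by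
          refine Finset.sum_le_sum fun i _ => Finset.sum_le_sum fun j _ => ?_
          have h1 : |(M - A) i j| ≤ ε := by
            have := hclose i j
            simp only [Matrix.sub_apply] at *
            exact this.le
          calc |u i * ((M - A) i j * u j)| = |u i| * (|(M - A) i j| * |u j|) := by
                rw [abs_mul, abs_mul]
            _ ≤ 1 * (ε * 1) := by
                apply mul_le_mul (hbound i) _ (by positivity) zero_le_one
                exact mul_le_mul h1 (hbound j) (abs_nonneg _) (by positivity)
            _ = ε := by ring
      _ = (n : ℝ) ^ 2 * ε := by
          simp [Finset.sum_const, Finset.card_univ]; ring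
  have hlt : (n : ℝ) ^ 2 * ε < c := by
    rw [hε]
    have h1 : (0:ℝ) < (n : ℝ) ^ 2 + 1 := by positivity
    rw [mul_div_assoc', div_lt_iff₀ h1]
    nlinarith
  have hMu : 0 < u ⬝ᵥ M *ᵥ u := by
    have := (abs_le.mp habs).1
    have h2 : u ⬝ᵥ M *ᵥ u = u ⬝ᵥ A *ᵥ u + u ⬝ᵥ (M - A) *ᵥ u := by linarith
    linarith
  positivity

attribute [local instance] Matrix.normedAddCommGroup Matrix.normedSpace

/-- Matrix multiplication as a continuous bilinear map. -/
private def mulL (n : ℕ) :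
    Matrix (Fin n) (Fin n) ℝ →L[ℝ] Matrix (Fin n) (Fin n) ℝ →L[ℝ] Matrix (Fin n) (Fin n) ℝ :=
  LinearMap.toContinuousLinearMap
    { toFun := fun A =>
        LinearMap.toContinuousLinearMap (LinearMap.mul ℝ (Matrix (Fin n) (Fin n) ℝ) A)
      map_add' := fun A B => by ext H; simp [add_mul]
      map_smul' := fun c A => by ext H; simp [smul_mul_assoc] }

private lemma mulL_apply {n : ℕ} (A B : Matrix (Fin n) (Fin n) ℝ) : mulL n A B = A * B := rfl

/-- The Sylvester operator `H ↦ A * H + H * A` as a continuous linear map. -/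
private def sylv {n : ℕ} (A : Matrix (Fin n) (Fin n) ℝ) :
    Matrix (Fin n) (Fin n) ℝ →L[ℝ] Matrix (Fin n) (Fin n) ℝ :=
  mulL n A + (id ((mulL n).flip A) : Matrix (Fin n) (Fin n) ℝ →L[ℝ] Matrix (Fin n) (Fin n) ℝ)

private lemma sylv_apply {n : ℕ} (A H : Matrix (Fin n) (Fin n) ℝ) :
    sylv A H = A * H + H * A := rfl

private lemma contDiff_sq {n : ℕ} (ν : WithTop ℕ∞) :
    ContDiff ℝ ν (fun M : Matrix (Fin n) (Fin n) ℝ => M * M) :=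
  ((mulL n).isBoundedBilinearMap.contDiff).comp (contDiff_id.prodMk contDiff_id)

private lemma hasFDerivAt_sq {n : ℕ} (A : Matrix (Fin n) (Fin n) ℝ) :
    HasFDerivAt (fun M : Matrix (Fin n) (Fin n) ℝ => M * M) (sylv A) A := by
  have hdiag : HasFDerivAt (fun M : Matrix (Fin n) (Fin n) ℝ => (M, M))
      ((ContinuousLinearMap.id ℝ _).prod (ContinuousLinearMap.id ℝ _)) A :=
    (hasFDerivAt_id A).prodMk (hasFDerivAt_id A)
  have h : HasFDerivAt
      ((fun p : Matrix (Fin n) (Fin n) ℝ × Matrix (Fin n) (Fin n) ℝ => mulL n p.1 p.2) ∘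
        (fun M : Matrix (Fin n) (Fin n) ℝ => (M, M)))
      (((mulL n).isBoundedBilinearMap.deriv (A, A)).comp
        ((ContinuousLinearMap.id ℝ _).prod (ContinuousLinearMap.id ℝ _))) A :=
    HasFDerivAt.comp A ((mulL n).isBoundedBilinearMap.hasFDerivAt (A, A)) hdiag
  exact h

/-- The Sylvester operator as a continuous linear equivalence, for positive definite `A`. -/
private def sylvEquiv {n : ℕ} (A : Matrix (Fin n) (Fin n) ℝ) (hA : A.PosDef) :
    Matrix (Fin n) (Fin n) ℝ ≃L[ℝ] Matrix (Fin n) (Fin n) ℝ :=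
  have hinj : Function.Injective ((sylv A).toLinearMap) := by
    rw [← LinearMap.ker_eq_bot, LinearMap.ker_eq_bot']
    intro H hH
    exact sylv_inj hA (by rw [← sylv_apply A H]; exact hH)
  LinearEquiv.toContinuousLinearEquiv
    (LinearEquiv.ofBijective ((sylv A).toLinearMap)
      ⟨hinj, LinearMap.injective_iff_surjective.mp hinj⟩)

private lemma sylvEquiv_coe {n : ℕ} (A : Matrix (Fin n) (Fin n) ℝ) (hA : A.PosDef) :
    (sylvEquiv A hA : Matrix (Fin n) (Fin n) ℝ →L[ℝ] Matrix (Fin n) (Fin n) ℝ) = sylv A := by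
  ext H; rfl

/-- If `R : ℝᵐ → S⁺ₙ(ℝ)` is `C^k` (with `k = ∞` allowed, covering the smooth
case) and `sqrtR x` denotes the pointwise symmetric positive definite square
root of `R x`, then `sqrtR` is `C^k` as well. -/
theorem posdef_sqrt_contDiff {m n : ℕ} (k : ℕ∞)
    (R sqrtR : (Fin m → ℝ) → Matrix (Fin n) (Fin n) ℝ)
    (hRs : ∀ x, (R x).IsSymm) (hRpd : ∀ x, (R x).PosDef)
    (hR : ∀ i j, ContDiff ℝ k fun x => R x i j)
    (hsq_symm : ∀ x, (sqrtR x).IsSymm)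
    (hsq_pd : ∀ x, (sqrtR x).PosDef)
    (hsq : ∀ x, sqrtR x * sqrtR x = R x) :
    ∀ i j, ContDiff ℝ k fun x => sqrtR x i j := by
  have hRc : ContDiff ℝ k R := contDiff_pi.mpr fun i => contDiff_pi.mpr fun j => hR i j
  have key : ContDiff ℝ k sqrtR := by
    rw [contDiff_iff_contDiffAt]
    intro x₀
    set A : Matrix (Fin n) (Fin n) ℝ := sqrtR x₀ with hA
    have hApd : A.PosDef := hsq_pd x₀
    set ν : WithTop ℕ∞ := ((k ⊔ 1 : ℕ∞) : WithTop ℕ∞) with hν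
    have hν1 : 1 ≤ ν := by rw [hν]; exact_mod_cast le_sup_right
    have hkν : (k : WithTop ℕ∞) ≤ ν := by rw [hν]; exact_mod_cast le_sup_left
    have hsqA : ContDiffAt ℝ ν (fun M : Matrix (Fin n) (Fin n) ℝ => M * M) A :=
      (contDiff_sq ν).contDiffAt
    have hf' : HasFDerivAt (fun M : Matrix (Fin n) (Fin n) ℝ => M * M)
        ((sylvEquiv A hApd : Matrix (Fin n) (Fin n) ℝ →L[ℝ] Matrix (Fin n) (Fin n) ℝ)) A := by
      rw [sylvEquiv_coe]; exact hasFDerivAt_sq A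
    set P := hsqA.toOpenPartialHomeomorph _ hf' (zero_lt_one.trans_le hν1).ne' with hP
    have hPcoe : (P : Matrix (Fin n) (Fin n) ℝ → Matrix (Fin n) (Fin n) ℝ) =
        fun M => M * M := rfl
    have hAmem : A ∈ P.source := hsqA.mem_toOpenPartialHomeomorph_source hf' (zero_lt_one.trans_le hν1).ne'
    have hAA : A * A = R x₀ := hsq x₀
    have hRtarget : R x₀ ∈ P.target := by
      rw [← hAA]
      exact hsqA.image_mem_toOpenPartialHomeomorph_target hf' (zero_lt_one.trans_le hν1).ne'
    have hg : ContDiffAt ℝ ν (⇑P.symm) (A * A) := hsqA.to_localInverse hf' (zero_lt_one.trans_le hν1).ne'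
    set B : (Fin m → ℝ) → Matrix (Fin n) (Fin n) ℝ := fun x => P.symm (R x) with hB
    have hBA : B x₀ = A := by
      show P.symm (R x₀) = A
      rw [← hAA]
      exact P.left_inv hAmem
    have hRcont : ContinuousAt R x₀ := hRc.continuous.continuousAt
    have hBcont : ContinuousAt B x₀ := by
      apply ContinuousAt.comp _ hRcont
      exact P.symm.continuousAt (by rw [OpenPartialHomeomorph.symm_source]; exact hRtarget)
    -- eventual facts
    have htarget : ∀ᶠ x in nhds x₀, R x ∈ P.target :=
      hRcont.eventually_mem (P.open_target.mem_nhds hRtarget)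
    have hTcont : Continuous fun M : Matrix (Fin n) (Fin n) ℝ => Mᵀ :=
      continuous_pi fun i => continuous_pi fun j => (continuous_apply i).comp (continuous_apply j)
    have hAsymm : Aᵀ = A := (hsq_symm x₀).eq
    have hTev : ∀ᶠ x in nhds x₀, (B x)ᵀ ∈ P.source := by
      have hc : ContinuousAt (fun x => (B x)ᵀ) x₀ := hTcont.continuousAt.comp hBcont
      apply hc.eventually_mem
      apply P.open_source.mem_nhds
      show (B x₀)ᵀ ∈ P.source
      rw [hBA, hAsymm]; exact hAmem
    have hBev : ∀ᶠ x in nhds x₀, B x ∈ P.source := htarget.mono fun x hx => P.map_target hx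
    obtain ⟨ε, hε, hcrit⟩ := posdef_of_close hApd
    have hclose : ∀ᶠ x in nhds x₀, ∀ i j, |B x i j - A i j| < ε := by
      rw [Filter.eventually_all]
      intro i
      rw [Filter.eventually_all]
      intro j
      have h1 : Filter.Tendsto B (nhds x₀) (nhds A) := by rw [← hBA]; exact hBcont
      have hlim : Filter.Tendsto (fun x => B x i j) (nhds x₀) (nhds (A i j)) :=
        ((continuous_apply j).tendsto (A i)).comp
          (((continuous_apply i).tendsto A).comp h1)
      have := Metric.tendsto_nhds.mp hlim ε hε
      exact this.mono fun x hx => by rwa [Real.dist_eq] at hx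
    have hEq : ∀ᶠ x in nhds x₀, B x = sqrtR x := by
      filter_upwards [htarget, hTev, hBev, hclose] with x hx1 hx2 hx3 hx4
      have hsqB : B x * B x = R x := by
        have := P.right_inv hx1
        rw [hB]
        exact this
      have hsym : (B x)ᵀ = B x := by
        apply P.injOn hx2 hx3
        show (B x)ᵀ * (B x)ᵀ = B x * B x
        rw [← transpose_mul, hsqB, (hRs x).eq]
      have hherm : (B x).IsHermitian := by
        rw [Matrix.IsHermitian, conjTranspose_eq_transpose_of_trivial]
        exact hsym
      have hBpd : (B x).PosDef := hcrit (B x) hherm hx4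
      open scoped MatrixOrder in
      exact (CFC.sq_eq_sq_iff (B x) (sqrtR x) (Matrix.nonneg_iff_posSemidef.mpr hBpd.posSemidef)
        (Matrix.nonneg_iff_posSemidef.mpr (hsq_pd x).posSemidef)).mp
        (by rw [pow_two, pow_two, hsqB, hsq x])
    have hgk : ContDiffAt ℝ k (⇑P.symm) (R x₀) := by
      rw [← hAA]; exact hg.of_le hkν
    have hBk : ContDiffAt ℝ k B x₀ := hgk.comp x₀ hRc.contDiffAt
    exact hBk.congr_of_eventuallyEq (hEq.mono fun x hx => hx.symm)
  intro i j
  exact contDiff_pi.mp (contDiff_pi.mp key i) j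

end PosdefSqrtAux
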